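/- arXiv:2101.07363 — 2 statements merged into one kernel-verified Lean document; each statement's English description precedes it below -/
import Mathlib

section
/- If T is (A,(m,n))-isosymmetric, then for every real s, Σ_{k=0}^n (-1)^{n−k} binom(n,k) (e^{isT})*^k I_A^m(T) (e^{isT})^k = 0; in particular, if I_A^m(T) ≥ 0 then e^{isT} is an (I_A^m(T), n)-isometry. -/
set_option maxHeartbeats 4000000
set_option synthInstance.maxHeartbeats 1000000

open ContinuousLinearMap

noncomputable def SOp {H : Type*} [NormedAddCommGroup H] [InnerProductSpace ℂ H]
    [CompleteSpace H] (A T : H →L[ℂ] H) (n : ℕ) : H →L[ℂ] H :=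
  ∑ k ∈ Finset.range (n + 1),
    ((-1 : ℂ) ^ (n - k) * (n.choose k : ℂ)) • (((adjoint T) ^ k) ∘L A ∘L (T ^ (n - k)))

noncomputable def OmegaS {H : Type*} [NormedAddCommGroup H] [InnerProductSpace ℂ H]
    [CompleteSpace H] (A T : H →L[ℂ] H) (m n : ℕ) : H →L[ℂ] H :=
  ∑ k ∈ Finset.range (m + 1),
    ((-1 : ℂ) ^ (m - k) * (m.choose k : ℂ)) • (((adjoint T) ^ k) ∘L SOp A T n ∘L (T ^ k))

noncomputable def IOp {H : Type*} [NormedAddCommGroup H] [InnerProductSpace ℂ H]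
    [CompleteSpace H] (A T : H →L[ℂ] H) (m : ℕ) : H →L[ℂ] H :=
  ∑ j ∈ Finset.range (m + 1),
    ((-1 : ℂ) ^ (m - j) * (m.choose j : ℂ)) • (((adjoint T) ^ j) ∘L A ∘L (T ^ j))

/-- `U` is a `(B,n)`-isometry. -/
def IsBnIsometry {H : Type*} [NormedAddCommGroup H] [InnerProductSpace ℂ H]
    [CompleteSpace H] (B U : H →L[ℂ] H) (n : ℕ) : Prop :=
  ∑ k ∈ Finset.range (n + 1),
    ((-1 : ℂ) ^ (n - k) * (n.choose k : ℂ)) • (((adjoint U) ^ k) ∘L B ∘L (U ^ k)) = 0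

/-! ### Auxiliary: finite differences of powers -/

section FD
open Finset Function

lemma fwdDiff_pow_eq_zero : ∀ j : ℕ, ∀ n : ℕ, j < n →
    (fwdDiff (1:ℕ))^[n] (fun x : ℕ ↦ (x : ℂ) ^ j) = 0 := by
  intro j
  induction j using Nat.strong_induction_on with
  | _ j IH =>
    intro n hj
    obtain ⟨n', rfl⟩ : ∃ n', n = n' + 1 := ⟨n - 1, by omega⟩
    rw [Function.iterate_succ_apply]
    have hΔ : fwdDiff (1:ℕ) (fun x : ℕ ↦ (x:ℂ)^j)
        = ∑ i ∈ Finset.range j, ((j.choose i : ℂ)) • fun x : ℕ ↦ (x:ℂ)^i := by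
      funext x
      simp only [fwdDiff, Finset.sum_apply, Pi.smul_apply, smul_eq_mul]
      push_cast
      rw [add_pow, Finset.sum_range_succ]
      simp only [one_pow, mul_one, Nat.choose_self, Nat.cast_one, Nat.sub_self, pow_zero,
        add_sub_cancel_right]
      exact Finset.sum_congr rfl fun i _ => by ring
    rw [hΔ, fwdDiff_iter_finset_sum]
    refine Finset.sum_eq_zero fun i hi => ?_
    rw [fwdDiff_iter_const_smul, IH i (Finset.mem_range.mp hi) n'
      (lt_of_lt_of_le (Finset.mem_range.mp hi) (by omega)), smul_zero]

lemma alt_sum_choose_pow {n j : ℕ} (hj : j < n) :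
    ∑ k ∈ Finset.range (n + 1), (-1 : ℂ) ^ (n - k) * (n.choose k : ℂ) * (k : ℂ) ^ j = 0 := by
  have h := fwdDiff_iter_eq_sum_shift (1 : ℕ) (fun x : ℕ ↦ (x : ℂ) ^ j) n 0
  rw [fwdDiff_pow_eq_zero j n hj] at h
  simp only [Pi.zero_apply, zero_add, smul_eq_mul, mul_one] at h
  rw [show ∑ k ∈ Finset.range (n + 1), (-1 : ℂ) ^ (n - k) * (n.choose k : ℂ) * (k : ℂ) ^ j
      = ∑ k ∈ Finset.range (n + 1), ((-1 : ℤ) ^ (n - k) * (n.choose k : ℤ)) • ((k : ℕ) : ℂ) ^ j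
    from Finset.sum_congr rfl fun k _ => by push_cast [zsmul_eq_mul]; ring, ← h]

end FD

/-! ### Auxiliary: left and right multiplication operators on `H →L[ℂ] H` -/

section Op

variable {H : Type*} [NormedAddCommGroup H] [InnerProductSpace ℂ H] [CompleteSpace H]

instance instTowerE : IsScalarTower ℂ ((H →L[ℂ] H) →L[ℂ] (H →L[ℂ] H))
    ((H →L[ℂ] H) →L[ℂ] (H →L[ℂ] H)) :=
  ⟨fun c f g => by
    ext X x
    simp only [ContinuousLinearMap.smul_apply, smul_eq_mul, ContinuousLinearMap.mul_apply,
      ContinuousLinearMap.coe_smul', Pi.smul_apply]⟩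

instance instCommE : SMulCommClass ℂ ((H →L[ℂ] H) →L[ℂ] (H →L[ℂ] H))
    ((H →L[ℂ] H) →L[ℂ] (H →L[ℂ] H)) :=
  ⟨fun c f g => by
    ext X x
    simp only [ContinuousLinearMap.smul_apply, smul_eq_mul, ContinuousLinearMap.mul_apply,
      ContinuousLinearMap.coe_smul', Pi.smul_apply, map_smul]⟩

noncomputable def Lm (a : H →L[ℂ] H) : (H →L[ℂ] H) →L[ℂ] (H →L[ℂ] H) :=
  ContinuousLinearMap.mul ℂ (H →L[ℂ] H) a

noncomputable def Rm (a : H →L[ℂ] H) : (H →L[ℂ] H) →L[ℂ] (H →L[ℂ] H) :=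
  (ContinuousLinearMap.mul ℂ (H →L[ℂ] H)).flip a

@[simp] lemma Lm_apply (a X : H →L[ℂ] H) : Lm a X = a ∘L X := rfl
@[simp] lemma Rm_apply (a X : H →L[ℂ] H) : Rm a X = X ∘L a := rfl

lemma Lm_smul (c : ℂ) (a : H →L[ℂ] H) : Lm (c • a) = c • Lm a := by
  ext X x; simp [Lm]

lemma Rm_smul (c : ℂ) (a : H →L[ℂ] H) : Rm (c • a) = c • Rm a := by
  ext X x; simp [Rm]

noncomputable def LmHom : (H →L[ℂ] H) →+* ((H →L[ℂ] H) →L[ℂ] (H →L[ℂ] H)) where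
  toFun := Lm
  map_one' := by ext X; simp [Lm, ContinuousLinearMap.mul_apply']
  map_mul' a b := by ext X; simp [Lm, ContinuousLinearMap.mul_apply', mul_assoc]
  map_zero' := by ext X; simp [Lm, ContinuousLinearMap.mul_apply']
  map_add' a b := by ext X; simp [Lm, ContinuousLinearMap.mul_apply', add_mul]

noncomputable def RmHom : (H →L[ℂ] H)ᵐᵒᵖ →+* ((H →L[ℂ] H) →L[ℂ] (H →L[ℂ] H)) where
  toFun x := Rm x.unop
  map_one' := by ext X; simp [Rm, ContinuousLinearMap.flip_apply, ContinuousLinearMap.mul_apply']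
  map_mul' a b := by
    ext X
    simp [Rm, ContinuousLinearMap.flip_apply, ContinuousLinearMap.mul_apply', mul_assoc]
  map_zero' := by ext X; simp [Rm, ContinuousLinearMap.flip_apply, ContinuousLinearMap.mul_apply']
  map_add' a b := by
    ext X
    simp [Rm, ContinuousLinearMap.flip_apply, ContinuousLinearMap.mul_apply', mul_add]

lemma LmHom_continuous : Continuous (LmHom (H := H)) :=
  (ContinuousLinearMap.mul ℂ (H →L[ℂ] H)).continuous

lemma RmHom_continuous : Continuous (RmHom (H := H)) :=
  ((ContinuousLinearMap.mul ℂ (H →L[ℂ] H)).flip.continuous).comp MulOpposite.continuous_unop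

lemma commute_Lm_Rm (a b : H →L[ℂ] H) : Commute (Lm a) (Rm b) := by
  ext X x; rfl

lemma Lm_pow (a : H →L[ℂ] H) (k : ℕ) : (Lm a) ^ k = Lm (a ^ k) :=
  (map_pow (LmHom (H := H)) a k).symm

lemma Rm_pow (a : H →L[ℂ] H) (k : ℕ) : (Rm a) ^ k = Rm (a ^ k) := by
  have h := (map_pow (RmHom (H := H)) (MulOpposite.op a) k).symm
  rw [← MulOpposite.op_pow] at h
  exact h

/-- Expansion of powers of `Δ = Lm T* - Rm T` applied to `X`. -/
lemma DeltaPow (T X : H →L[ℂ] H) (q : ℕ) :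
    ((Lm (star T) - Rm T) ^ q) X
      = ∑ k ∈ Finset.range (q + 1), ((-1 : ℂ) ^ (q - k) * (q.choose k : ℂ)) •
          ((star T ^ k) ∘L X ∘L (T ^ (q - k))) := by
  have hcomm : Commute (Lm (star T)) (-(Rm T)) := Commute.neg_right (commute_Lm_Rm (star T) T)
  rw [sub_eq_add_neg, hcomm.add_pow, ContinuousLinearMap.sum_apply]
  refine Finset.sum_congr rfl fun k hk => ?_
  have h1 : (-(Rm T)) ^ (q - k) = ((-1 : ℂ) ^ (q - k)) • ((Rm T) ^ (q - k)) := by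
    rw [← neg_one_smul ℂ (Rm T), smul_pow]
  have hcast : ((q.choose k : ℕ) : (H →L[ℂ] H) →L[ℂ] (H →L[ℂ] H))
      = ((q.choose k : ℕ) : ℂ) • (1 : (H →L[ℂ] H) →L[ℂ] (H →L[ℂ] H)) := by
    rw [← map_natCast (algebraMap ℂ ((H →L[ℂ] H) →L[ℂ] (H →L[ℂ] H))) (q.choose k),
      Algebra.algebraMap_eq_smul_one]
  rw [h1, Lm_pow, Rm_pow, hcast]
  simp only [smul_mul_assoc, mul_smul_comm, mul_one, ContinuousLinearMap.smul_apply,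
    ContinuousLinearMap.mul_apply, Lm_apply, Rm_apply, smul_smul]
  rw [mul_comm]

/-- Expansion of powers of `Γ = Lm T* * Rm T - 1` applied to `X`. -/
lemma GammaPow (T X : H →L[ℂ] H) (m : ℕ) :
    ((Lm (star T) * Rm T - 1) ^ m) X
      = ∑ k ∈ Finset.range (m + 1), ((-1 : ℂ) ^ (m - k) * (m.choose k : ℂ)) •
          ((star T ^ k) ∘L X ∘L (T ^ k)) := by
  have hcomm : Commute (Lm (star T) * Rm T) (-(1 : (H →L[ℂ] H) →L[ℂ] (H →L[ℂ] H))) :=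
    (Commute.one_right (Lm (star T) * Rm T)).neg_right
  rw [sub_eq_add_neg, hcomm.add_pow, ContinuousLinearMap.sum_apply]
  refine Finset.sum_congr rfl fun k hk => ?_
  have hmp : (Lm (star T) * Rm T) ^ k = Lm (star T ^ k) * Rm (T ^ k) := by
    rw [(commute_Lm_Rm (star T) T).mul_pow, Lm_pow, Rm_pow]
  have h1 : (-(1 : (H →L[ℂ] H) →L[ℂ] (H →L[ℂ] H))) ^ (m - k)
      = ((-1 : ℂ) ^ (m - k)) • (1 : (H →L[ℂ] H) →L[ℂ] (H →L[ℂ] H)) := by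
    rw [← neg_one_smul ℂ (1 : (H →L[ℂ] H) →L[ℂ] (H →L[ℂ] H)), smul_pow, one_pow]
  have hcast : ((m.choose k : ℕ) : (H →L[ℂ] H) →L[ℂ] (H →L[ℂ] H))
      = ((m.choose k : ℕ) : ℂ) • (1 : (H →L[ℂ] H) →L[ℂ] (H →L[ℂ] H)) := by
    rw [← map_natCast (algebraMap ℂ ((H →L[ℂ] H) →L[ℂ] (H →L[ℂ] H))) (m.choose k),
      Algebra.algebraMap_eq_smul_one]
  rw [hmp, h1, hcast]
  simp only [smul_mul_assoc, mul_smul_comm, mul_one, ContinuousLinearMap.smul_apply,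
    ContinuousLinearMap.mul_apply, Lm_apply, Rm_apply, smul_smul]
  rw [mul_comm]

lemma IOp_eq (A T : H →L[ℂ] H) (m : ℕ) :
    IOp A T m = ((Lm (star T) * Rm T - 1) ^ m) A := by
  rw [GammaPow T A m, IOp]
  simp only [← ContinuousLinearMap.star_eq_adjoint]

lemma SOp_eq (A T : H →L[ℂ] H) (n : ℕ) :
    SOp A T n = ((Lm (star T) - Rm T) ^ n) A := by
  rw [DeltaPow T A n, SOp]
  simp only [← ContinuousLinearMap.star_eq_adjoint]

lemma OmegaS_eq (A T : H →L[ℂ] H) (m n : ℕ) :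
    OmegaS A T m n = ((Lm (star T) * Rm T - 1) ^ m) (SOp A T n) := by
  rw [GammaPow T (SOp A T n) m, OmegaS]
  simp only [← ContinuousLinearMap.star_eq_adjoint]

lemma Delta_pow_IOp_eq_zero {A T : H →L[ℂ] H} {m n : ℕ} (h : OmegaS A T m n = 0)
    (q : ℕ) (hq : n ≤ q) : ((Lm (star T) - Rm T) ^ q) (IOp A T m) = 0 := by
  have hΔΓ : Commute (Lm (star T) - Rm T) (Lm (star T) * Rm T - 1) := by
    have h1 : Commute (Lm (star T)) (Lm (star T) * Rm T) :=
      (Commute.refl (Lm (star T))).mul_right (commute_Lm_Rm (star T) T)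
    have h2 : Commute (Rm T) (Lm (star T) * Rm T) :=
      ((commute_Lm_Rm (star T) T).symm).mul_right (Commute.refl (Rm T))
    exact (h1.sub_left h2).sub_right (Commute.one_right _)
  have hbase : ((Lm (star T) - Rm T) ^ n) (IOp A T m) = 0 := by
    rw [IOp_eq A T m, ← ContinuousLinearMap.mul_apply,
      (hΔΓ.pow_pow n m).eq, ContinuousLinearMap.mul_apply, ← SOp_eq A T n, ← OmegaS_eq A T m n, h]
  obtain ⟨r, rfl⟩ : ∃ r, q = r + n := ⟨q - n, by omega⟩
  rw [pow_add, ContinuousLinearMap.mul_apply, hbase, map_zero]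

end Op

theorem exp_is_isometry_of_isosymmetric {H : Type*} [NormedAddCommGroup H]
    [InnerProductSpace ℂ H] [CompleteSpace H] (A T : H →L[ℂ] H) (hA : A.IsPositive)
    (m n : ℕ) (h : OmegaS A T m n = 0) :
    (∀ s : ℝ,
        ∑ k ∈ Finset.range (n + 1),
          ((-1 : ℂ) ^ (n - k) * (n.choose k : ℂ)) •
            (((adjoint (NormedSpace.exp ((Complex.I * (s : ℂ)) • T))) ^ k) ∘L IOp A T m ∘L
              ((NormedSpace.exp ((Complex.I * (s : ℂ)) • T)) ^ k)) = 0) ∧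
      ((IOp A T m).IsPositive →
        ∀ s : ℝ, IsBnIsometry (IOp A T m) (NormedSpace.exp ((Complex.I * (s : ℂ)) • T)) n) := by
  have main : ∀ s : ℝ,
      ∑ k ∈ Finset.range (n + 1),
        ((-1 : ℂ) ^ (n - k) * (n.choose k : ℂ)) •
          (((adjoint (NormedSpace.exp ((Complex.I * (s : ℂ)) • T))) ^ k) ∘L IOp A T m ∘L
            ((NormedSpace.exp ((Complex.I * (s : ℂ)) • T)) ^ k)) = 0 := by
    intro s
    let +nondep : NormedAlgebra ℚ (H →L[ℂ] H) := .restrictScalars ℚ ℂ _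
    let +nondep : NormedAlgebra ℚ (H →L[ℂ] H)ᵐᵒᵖ := .restrictScalars ℚ ℂ _
    let +nondep : NormedAlgebra ℚ ((H →L[ℂ] H) →L[ℂ] (H →L[ℂ] H)) := .restrictScalars ℚ ℂ _
    set c : ℂ := Complex.I * (s : ℂ) with hc
    set t : H →L[ℂ] H := c • T with ht
    set u : H →L[ℂ] H := NormedSpace.exp t with hu
    set D : (H →L[ℂ] H) →L[ℂ] (H →L[ℂ] H) := Lm (star t) + Rm t with hD
    have hconj : star c = -c := by
      simp [hc, Complex.ext_iff]
    have hstart : star t = (-c) • star T := by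
      rw [ht, star_smul, hconj]
    have hDsmul : D = (-c) • (Lm (star T) - Rm T) := by
      rw [hD, hstart, ht, Lm_smul, Rm_smul]
      module
    have hDpow0 : ∀ j : ℕ, n ≤ j → (D ^ j) (IOp A T m) = 0 := by
      intro j hj
      rw [hDsmul, smul_pow, ContinuousLinearMap.smul_apply,
        Delta_pow_IOp_eq_zero h j hj, smul_zero]
    have hadj : adjoint u = NormedSpace.exp (star t) := by
      rw [← ContinuousLinearMap.star_eq_adjoint, hu, NormedSpace.star_exp]
    have hexpL : Lm (NormedSpace.exp (star t)) = NormedSpace.exp (Lm (star t)) :=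
      NormedSpace.map_exp (LmHom (H := H)) LmHom_continuous (star t)
    have hexpR : Rm u = NormedSpace.exp (Rm t) := by
      have h1 := NormedSpace.map_exp (RmHom (H := H)) RmHom_continuous (MulOpposite.op t)
      rwa [NormedSpace.exp_op] at h1
    have hconj1 : Lm (adjoint u) * Rm u = NormedSpace.exp D := by
      rw [hadj, hexpL, hexpR, hD, NormedSpace.exp_add_of_commute (commute_Lm_Rm (star t) t)]
    have hterm : ∀ k : ℕ, ((adjoint u) ^ k) ∘L IOp A T m ∘L (u ^ k)
        = ∑ j ∈ Finset.range n, (((Nat.factorial j : ℕ) : ℂ)⁻¹ * (k : ℂ) ^ j) • ((D ^ j) (IOp A T m)) := by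
      intro k
      have e1 : ((Lm (adjoint u) * Rm u) ^ k) (IOp A T m)
          = ((adjoint u) ^ k) ∘L IOp A T m ∘L (u ^ k) := by
        rw [(commute_Lm_Rm (adjoint u) u).mul_pow, Lm_pow, Rm_pow]
        simp only [ContinuousLinearMap.mul_apply, Lm_apply, Rm_apply]
      rw [← e1, hconj1, ← NormedSpace.exp_nsmul, NormedSpace.exp_eq_tsum ℂ]
      have happ := ContinuousLinearMap.map_tsum
          (ContinuousLinearMap.apply ℂ (H →L[ℂ] H) (IOp A T m))
          (NormedSpace.expSeries_summable' (𝕂 := ℂ) (k • D))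
      simp only [ContinuousLinearMap.apply_apply] at happ
      rw [happ]
      have hterm2 : ∀ j : ℕ, ((((Nat.factorial j : ℕ) : ℂ)⁻¹) • ((k • D) ^ j)) (IOp A T m)
          = (((Nat.factorial j : ℕ) : ℂ)⁻¹ * (k : ℂ) ^ j) • ((D ^ j) (IOp A T m)) := by
        intro j
        have : SMulCommClass ℕ ((H →L[ℂ] H) →L[ℂ] (H →L[ℂ] H)) ((H →L[ℂ] H) →L[ℂ] (H →L[ℂ] H)) :=
          ⟨fun a b c => by simp only [nsmul_eq_mul, smul_eq_mul]; rw [← mul_assoc, ← mul_assoc, Nat.cast_comm]⟩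
        rw [smul_pow]
        simp only [ContinuousLinearMap.smul_apply]
        rw [← Nat.cast_smul_eq_nsmul ℂ (k ^ j), smul_smul]
        congr 1
        push_cast
        ring
      rw [tsum_congr hterm2]
      refine tsum_eq_sum fun j hj => ?_
      rw [hDpow0 j (Nat.le_of_not_lt (by simpa using hj)), smul_zero]
    simp only [hterm, Finset.smul_sum]
    rw [Finset.sum_comm]
    refine Finset.sum_eq_zero fun j hj => ?_
    simp only [smul_smul]
    rw [← Finset.sum_smul]
    have hsum : ∑ k ∈ Finset.range (n + 1),
        ((-1 : ℂ) ^ (n - k) * (n.choose k : ℂ)) * (((Nat.factorial j : ℕ) : ℂ)⁻¹ * (k : ℂ) ^ j)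
        = ((Nat.factorial j : ℕ) : ℂ)⁻¹ * ∑ k ∈ Finset.range (n + 1),
            (-1 : ℂ) ^ (n - k) * (n.choose k : ℂ) * (k : ℂ) ^ j := by
      rw [Finset.mul_sum]
      exact Finset.sum_congr rfl fun k _ => by ring
    rw [hsum, alt_sum_choose_pow (Finset.mem_range.mp hj), mul_zero, zero_smul]
  exact ⟨main, fun _ s => main s⟩
end

section
/- If n is even and T is an (A,n)-symmetric operator (S_A^n(T) = 0), then T is (A,n−1)-symmetric (S_A^{n−1}(T) = 0). -/
open ContinuousLinearMap

open NormedSpace Filter Finset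
open scoped InnerProductSpace

set_option linter.unusedSectionVars false


section Aux

variable {𝔸 : Type*} [NormedRing 𝔸] [NormedAlgebra ℂ 𝔸] [CompleteSpace 𝔸]

noncomputable def lmulOp (c : 𝔸) : 𝔸 →L[ℂ] 𝔸 := ContinuousLinearMap.mul ℂ 𝔸 c
noncomputable def rmulOp (d : 𝔸) : 𝔸 →L[ℂ] 𝔸 := (ContinuousLinearMap.mul ℂ 𝔸).flip d

@[simp] lemma lmulOp_apply (c X : 𝔸) : lmulOp c X = c * X := rfl
@[simp] lemma rmulOp_apply (d X : 𝔸) : rmulOp d X = X * d := rfl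

lemma commute_lmulOp_rmulOp (c d : 𝔸) : Commute (lmulOp c) (rmulOp d) := by
  ext X
  simp [mul_assoc, Commute, SemiconjBy, ContinuousLinearMap.mul_apply]

lemma lmulOp_pow_apply (c : 𝔸) (k : ℕ) (X : 𝔸) : ((lmulOp c) ^ k) X = c ^ k * X := by
  induction k with
  | zero => simp
  | succ k ih => simp [pow_succ', ContinuousLinearMap.mul_apply, ih, mul_assoc]

lemma rmulOp_pow_apply (d : 𝔸) (k : ℕ) (X : 𝔸) : ((rmulOp d) ^ k) X = X * d ^ k := by
  induction k with
  | zero => simp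
  | succ k ih => simp [pow_succ', ContinuousLinearMap.mul_apply, ih, mul_assoc,
      pow_mul_comm']

lemma neg_pow_apply (R : 𝔸 →L[ℂ] 𝔸) (j : ℕ) (X : 𝔸) :
    ((-R) ^ j) X = ((-1 : ℂ) ^ j) • (R ^ j) X := by
  induction j with
  | zero => simp
  | succ j ih =>
      rw [pow_succ', ContinuousLinearMap.mul_apply, ih, map_smul,
        ContinuousLinearMap.neg_apply]
      simp [pow_succ' R j, ContinuousLinearMap.mul_apply, smul_neg, neg_smul]
      rw [pow_succ, mul_comm, neg_one_mul, neg_smul]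

lemma exp_apply_eq_tsum (M : 𝔸 →L[ℂ] 𝔸) (X : 𝔸) :
    exp M X = ∑' n : ℕ, ((n.factorial : ℂ))⁻¹ • (M ^ n) X := by
  rw [exp_eq_tsum ℂ]
  have := (ContinuousLinearMap.apply ℂ 𝔸 X).map_tsum
    (expSeries_summable' (𝕂 := ℂ) M)
  simpa using this

lemma exp_lmulOp_apply (c X : 𝔸) : exp (lmulOp c) X = exp c * X := by
  rw [exp_apply_eq_tsum]
  have h1 : ∀ n : ℕ, ((n.factorial : ℂ))⁻¹ • ((lmulOp c) ^ n) X
      = ((rmulOp X)) (((n.factorial : ℂ))⁻¹ • c ^ n) := by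
    intro n
    rw [lmulOp_pow_apply]; simp [smul_mul_assoc]
  calc ∑' n : ℕ, ((n.factorial : ℂ))⁻¹ • ((lmulOp c) ^ n) X
      = ∑' n : ℕ, (rmulOp X) (((n.factorial : ℂ))⁻¹ • c ^ n) := by simp_rw [h1]
    _ = (rmulOp X) (∑' n : ℕ, ((n.factorial : ℂ))⁻¹ • c ^ n) :=
        ((rmulOp X).map_tsum (expSeries_summable' (𝕂 := ℂ) c)).symm
    _ = exp c * X := by
        rw [show exp c = ∑' (n : ℕ), ((n.factorial : ℂ))⁻¹ • c ^ n from congrFun (exp_eq_tsum ℂ) c]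
        rfl

lemma exp_rmulOp_apply (d X : 𝔸) : exp (rmulOp d) X = X * exp d := by
  rw [exp_apply_eq_tsum]
  have h1 : ∀ n : ℕ, ((n.factorial : ℂ))⁻¹ • ((rmulOp d) ^ n) X
      = ((lmulOp X)) (((n.factorial : ℂ))⁻¹ • d ^ n) := by
    intro n
    rw [rmulOp_pow_apply]; simp [mul_smul_comm]
  calc ∑' n : ℕ, ((n.factorial : ℂ))⁻¹ • ((rmulOp d) ^ n) X
      = ∑' n : ℕ, (lmulOp X) (((n.factorial : ℂ))⁻¹ • d ^ n) := by simp_rw [h1]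
    _ = (lmulOp X) (∑' n : ℕ, ((n.factorial : ℂ))⁻¹ • d ^ n) :=
        ((lmulOp X).map_tsum (expSeries_summable' (𝕂 := ℂ) d)).symm
    _ = X * exp d := by
        rw [show exp d = ∑' (n : ℕ), ((n.factorial : ℂ))⁻¹ • d ^ n from congrFun (exp_eq_tsum ℂ) d]
        rfl

lemma exp_conj_formula (c d X : 𝔸) :
    exp c * X * exp d = exp (lmulOp c + rmulOp d) X := by
  letI : NormedAlgebra ℚ (𝔸 →L[ℂ] 𝔸) := .restrictScalars ℚ ℂ _
  rw [exp_add_of_commute (commute_lmulOp_rmulOp c d), ContinuousLinearMap.mul_apply,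
    exp_rmulOp_apply, exp_lmulOp_apply, mul_assoc]

end Aux

section Tendsto

/-- auxiliary limit lemma -/
lemma tendsto_aux (b : ℕ → ℂ) (p : ℕ) (l : Filter ℝ) [l.NeBot]
    (hl : Tendsto (fun t : ℝ => |t|) l atTop) :
    Tendsto (fun t : ℝ => ∑ r ∈ Finset.range (p + 1), ((t ^ r * (t ^ p)⁻¹ : ℝ)) • b r) l
      (nhds (b p)) := by
  have hne : ∀ᶠ t : ℝ in l, t ≠ 0 := by
    filter_upwards [hl.eventually_ge_atTop 1] with t ht
    intro h; rw [h] at ht; norm_num at ht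
  have key : ∀ r ∈ Finset.range (p + 1),
      Tendsto (fun t : ℝ => ((t ^ r * (t ^ p)⁻¹ : ℝ)) • b r) l
        (nhds (if r = p then b p else 0)) := by
    intro r hr
    rcases eq_or_ne r p with rfl | hrp
    · simp only [if_pos rfl]
      have : ∀ᶠ t : ℝ in l, ((t ^ r * (t ^ r)⁻¹ : ℝ)) • b r = b r := by
        filter_upwards [hne] with t ht
        rw [mul_inv_cancel₀ (pow_ne_zero _ ht), one_smul]
      exact Tendsto.congr' (Filter.EventuallyEq.symm this) tendsto_const_nhds
    · simp only [if_neg hrp]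
      have hrltp : r < p := by
        rcases lt_or_ge r p with h' | h'
        · exact h'
        · exact absurd (Nat.le_antisymm (Nat.lt_succ_iff.mp (Finset.mem_range.mp hr)) h') hrp
      have h0 : Tendsto (fun t : ℝ => (t ^ r * (t ^ p)⁻¹ : ℝ)) l (nhds 0) := by
        apply squeeze_zero_norm' (a := fun t : ℝ => ((|t| ^ (p - r))⁻¹ : ℝ))
        · filter_upwards [hne] with t ht
          have h1 : |t| ≠ 0 := abs_ne_zero.mpr ht
          rw [Real.norm_eq_abs, abs_mul, abs_inv, abs_pow, abs_pow]
          rw [show p = r + (p - r) by omega, pow_add, mul_inv]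
          rw [← mul_assoc, mul_inv_cancel₀ (pow_ne_zero _ h1), one_mul,
            Nat.add_sub_cancel_left]
        · exact ((tendsto_pow_atTop (by omega : p - r ≠ 0)).comp hl).inv_tendsto_atTop
      simpa using h0.smul_const (b r)
  have := tendsto_finset_sum (Finset.range (p + 1)) key
  simpa [Finset.sum_ite_eq' (Finset.range (p + 1)) p] using this

end Tendsto

section Hilbert

variable {H : Type*} [NormedAddCommGroup H] [InnerProductSpace ℂ H] [CompleteSpace H]

noncomputable def Dop (T : H →L[ℂ] H) : (H →L[ℂ] H) →L[ℂ] (H →L[ℂ] H) :=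
  lmulOp (adjoint T) - rmulOp T

end Hilbert

section Hilbert2

variable {H : Type*} [NormedAddCommGroup H] [InnerProductSpace ℂ H] [CompleteSpace H]

set_option synthInstance.maxHeartbeats 1000000 in
set_option maxHeartbeats 1000000 in
lemma conj_exp_eq (A T : H →L[ℂ] H) (n : ℕ) (h : ((Dop T) ^ n) A = 0) (t : ℝ) :
    star (exp ((Complex.I * t) • T)) * A * exp ((Complex.I * t) • T)
      = ∑ r ∈ Finset.range n,
          ((((r.factorial : ℂ))⁻¹ * (-(Complex.I * t)) ^ r) • (((Dop T) ^ r) A)) := by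
  have hstar : star (exp ((Complex.I * t) • T)) = exp ((-(Complex.I * t)) • adjoint T) := by
    rw [star_exp]
    congr 1
    rw [star_smul, star_eq_adjoint]
    congr 1
    simp [Complex.ext_iff]
  rw [hstar, exp_conj_formula]
  have hop : lmulOp ((-(Complex.I * t)) • adjoint T) + rmulOp ((Complex.I * t) • T)
      = (-(Complex.I * t)) • Dop T := by
    ext X
    simp only [ContinuousLinearMap.add_apply, lmulOp_apply, rmulOp_apply,
      ContinuousLinearMap.smul_apply, Dop, ContinuousLinearMap.sub_apply,
      smul_mul_assoc, mul_smul_comm, smul_sub]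
    rw [neg_smul, neg_smul, sub_eq_add_neg, neg_neg]
  rw [hop, exp_apply_eq_tsum]
  rw [tsum_eq_sum (s := Finset.range n) ?_]
  · refine Finset.sum_congr rfl fun r hr => ?_
    rw [smul_pow, ContinuousLinearMap.smul_apply, smul_smul]
  · intro r hr
    have hrn : n ≤ r := by simpa using hr
    have hzero : ((Dop T) ^ r) A = 0 := by
      rw [show r = (r - n) + n by omega, pow_add, ContinuousLinearMap.mul_apply, h, map_zero]
    rw [smul_pow, ContinuousLinearMap.smul_apply, hzero, smul_zero, smul_zero]

end Hilbert2

section Hilbert3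

variable {H : Type*} [NormedAddCommGroup H] [InnerProductSpace ℂ H] [CompleteSpace H]

lemma SOp_eq_Dop (A T : H →L[ℂ] H) (m : ℕ) : SOp A T m = ((Dop T) ^ m) A := by
  have hc := (commute_lmulOp_rmulOp (𝔸 := H →L[ℂ] H) (adjoint T) T).neg_right
  have hD : Dop T = lmulOp (adjoint T) + -(rmulOp T) := by rw [Dop, sub_eq_add_neg]
  rw [SOp, hD, hc.add_pow, ContinuousLinearMap.sum_apply]
  refine Finset.sum_congr rfl fun k hk => ?_
  rw [ContinuousLinearMap.mul_apply, ContinuousLinearMap.natCast_apply, map_nsmul,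
    ContinuousLinearMap.mul_apply, neg_pow_apply, map_smul, lmulOp_pow_apply,
    rmulOp_pow_apply, ← Nat.cast_smul_eq_nsmul ℂ, smul_smul, mul_comm ((m.choose k : ℂ))]
  congr 1

end Hilbert3

theorem symmetric_reduce_n {H : Type*} [NormedAddCommGroup H] [InnerProductSpace ℂ H]
    [CompleteSpace H] (A T : H →L[ℂ] H) (hA : A.IsPositive) (n : ℕ)
    (hn_even : Even n) (hn : 2 ≤ n) (h : SOp A T n = 0) : SOp A T (n - 1) = 0 := by
  set p := n - 1 with hp
  have hnp : n = p + 1 := by omega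
  have hDn : ((Dop T) ^ n) A = 0 := by rw [← SOp_eq_Dop]; exact h
  have hp_odd : Odd p := Nat.Even.sub_odd (by omega) hn_even odd_one
  have main : ∀ x : H, ⟪x, (((Dop T) ^ p) A) x⟫_ℂ = 0 := by
    intro x
    set a : ℕ → ℂ := fun r => ⟪x, (((Dop T) ^ r) A) x⟫_ℂ with ha
    set b : ℕ → ℂ := fun r => ((r.factorial : ℂ))⁻¹ * (-Complex.I) ^ r * a r with hb
    set E : ℝ → (H →L[ℂ] H) := fun t => exp ((Complex.I * t) • T) with hE
    set φ : ℝ → ℂ := fun t => ⟪x, ((star (E t) * A * E t)) x⟫_ℂ with hφ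
    have hφ_eq : ∀ t : ℝ, φ t = ∑ r ∈ Finset.range (p + 1), ((t : ℝ) ^ r) • b r := by
      intro t
      rw [hφ]
      simp only
      rw [conj_exp_eq A T n hDn t, hnp, ContinuousLinearMap.sum_apply, inner_sum]
      refine Finset.sum_congr rfl fun r hr => ?_
      rw [ContinuousLinearMap.smul_apply, inner_smul_right, hb]
      simp only [ha, Complex.real_smul, Complex.ofReal_pow]
      ring
    have hφ_inner : ∀ t : ℝ, φ t = ⟪(E t) x, A ((E t) x)⟫_ℂ := by
      intro t
      rw [hφ]
      simp only
      rw [ContinuousLinearMap.mul_apply, ContinuousLinearMap.mul_apply, star_eq_adjoint,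
        ContinuousLinearMap.adjoint_inner_right]
    have hφ_re : ∀ t : ℝ, 0 ≤ (φ t).re := by
      intro t
      rw [hφ_inner t]
      simpa using hA.re_inner_nonneg_right ((E t) x)
    have hφ_im : ∀ t : ℝ, (φ t).im = 0 := by
      intro t
      have h2 : (starRingEnd ℂ) (φ t) = φ t := by
        rw [hφ_inner t, inner_conj_symm]
        nth_rewrite 1 [← hA.isSelfAdjoint]
        rw [star_eq_adjoint, ContinuousLinearMap.adjoint_inner_left]
      exact Complex.conj_eq_iff_im.mp h2
    have hsum : ∀ t : ℝ, ((t ^ p)⁻¹ : ℝ) • φ t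
        = ∑ r ∈ Finset.range (p + 1), ((t ^ r * (t ^ p)⁻¹ : ℝ)) • b r := by
      intro t
      rw [hφ_eq t, Finset.smul_sum]
      exact Finset.sum_congr rfl fun r _ => by rw [smul_smul, mul_comm]
    have hTtop : Tendsto (fun t : ℝ => ((t ^ p)⁻¹ : ℝ) • φ t) atTop (nhds (b p)) := by
      have := tendsto_aux b p atTop (by simpa using tendsto_abs_atTop_atTop)
      exact this.congr fun t => (hsum t).symm
    have hTbot : Tendsto (fun t : ℝ => ((t ^ p)⁻¹ : ℝ) • φ t) atBot (nhds (b p)) := by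
      have := tendsto_aux b p atBot (by simpa using tendsto_abs_atBot_atTop)
      exact this.congr fun t => (hsum t).symm
    have hre_top : 0 ≤ (b p).re := by
      refine ge_of_tendsto ((Complex.continuous_re.tendsto (b p)).comp hTtop) ?_
      filter_upwards [eventually_ge_atTop (1 : ℝ)] with t ht
      have h1 : (0 : ℝ) < t ^ p := pow_pos (by linarith) p
      have : (((t ^ p)⁻¹ : ℝ) • φ t).re = ((t ^ p)⁻¹ : ℝ) * (φ t).re := by
        rw [Complex.smul_re]; rfl
      simp only [Function.comp]
      rw [this]
      exact mul_nonneg (le_of_lt (inv_pos.mpr h1)) (hφ_re t)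
    have hre_bot : (b p).re ≤ 0 := by
      refine le_of_tendsto ((Complex.continuous_re.tendsto (b p)).comp hTbot) ?_
      filter_upwards [eventually_le_atBot (-1 : ℝ)] with t ht
      have h1 : t ^ p < 0 := hp_odd.pow_neg (by linarith)
      have h2 : (((t ^ p)⁻¹ : ℝ) • φ t).re = ((t ^ p)⁻¹ : ℝ) * (φ t).re := by
        rw [Complex.smul_re]; rfl
      simp only [Function.comp]
      rw [h2]
      exact mul_nonpos_iff.mpr (Or.inr ⟨le_of_lt (inv_neg''.mpr h1), hφ_re t⟩)
    have him : (b p).im = 0 := by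
      have h3 : Tendsto (fun t : ℝ => (((t ^ p)⁻¹ : ℝ) • φ t).im) atTop (nhds (b p).im) :=
        (Complex.continuous_im.tendsto (b p)).comp hTtop
      have h4 : (fun t : ℝ => (((t ^ p)⁻¹ : ℝ) • φ t).im) = fun _ => (0 : ℝ) := by
        funext t
        rw [Complex.smul_im]
        simp [hφ_im t]
      rw [h4] at h3
      exact tendsto_nhds_unique h3 tendsto_const_nhds
    have hbp : b p = 0 := Complex.ext (le_antisymm hre_bot hre_top) him
    have hfac : ((p.factorial : ℂ))⁻¹ ≠ 0 :=
      inv_ne_zero (Nat.cast_ne_zero.mpr (Nat.factorial_ne_zero p))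
    have hI : ((-Complex.I) ^ p : ℂ) ≠ 0 :=
      pow_ne_zero _ (neg_ne_zero.mpr Complex.I_ne_zero)
    have : a p = 0 := by
      have := hbp
      rw [hb] at this
      simp only at this
      rcases mul_eq_zero.mp this with h' | h'
      · rcases mul_eq_zero.mp h' with h'' | h''
        · exact absurd h'' hfac
        · exact absurd h'' hI
      · exact h'
    rw [ha] at this
    exact this
  rw [SOp_eq_Dop]
  have h0 : ∀ x : H, ⟪(((Dop T) ^ p) A) x, x⟫_ℂ = 0 := by
    intro x
    rw [← inner_conj_symm, main x, map_zero]
  have := (inner_map_self_eq_zero ((((Dop T) ^ p) A : H →L[ℂ] H) : H →ₗ[ℂ] H)).mp h0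
  exact ContinuousLinearMap.coe_injective this
end
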